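/- Let κ ∈ ℂ with κ ∉ ℝ, 0 < |κ| < 1, κ = ρe^{2πip/q} with gcd(p,q)=1 and q odd, and suppose β := ρ^{−q} ≤ 2. Then the attractor A_κ = { Σ_{k≥0} a_k κ^k : a_k ∈ {−1,+1} } is a convex polygon; specifically, A_κ equals the Minkowski sum J + κJ + κ²J + ⋯ + κ^{q−1}J, where J = [−β/(β−1), β/(β−1)] · (as a subset of ℝ ⊂ ℂ). -/

import Mathlib

open Complex
open Complex

/-- Greedy signed β-expansion: every point of the interval has a ±1 expansion. -/
lemma greedy_expansion (β : ℝ) (hβ1 : 1 < β) (hβ2 : β ≤ 2) (x : ℝ)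
    (hx : |x| ≤ β / (β - 1)) :
    ∃ b : ℕ → ℝ, (∀ j, b j = 1 ∨ b j = -1) ∧
      HasSum (fun j => b j * (β⁻¹) ^ j) x := by
  classical
  have hβ0 : (0:ℝ) < β := lt_trans one_pos hβ1
  have hβ1' : (0:ℝ) < β - 1 := by linarith
  set M := β / (β - 1) with hM
  have hMval : M * (β - 1) = β := div_mul_cancel₀ _ hβ1'.ne'
  have hM2 : 2 ≤ M := by nlinarith
  let sgn : ℝ → ℝ := fun t => if 0 ≤ t then 1 else -1
  let r : ℕ → ℝ := fun n => Nat.rec (motive := fun _ => ℝ) x (fun _ rn => β * (rn - sgn rn)) n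
  have hr0 : r 0 = x := rfl
  have hrs : ∀ n, r (n + 1) = β * (r n - sgn (r n)) := fun n => rfl
  have hsgn : ∀ t, sgn t = 1 ∨ sgn t = -1 := by
    intro t; by_cases h : 0 ≤ t <;> simp [sgn, h]
  have hsgn_pos : ∀ t : ℝ, 0 ≤ t → sgn t = 1 := by
    intro t h; simp [sgn, h]
  have hsgn_neg : ∀ t : ℝ, ¬ 0 ≤ t → sgn t = -1 := by
    intro t h; simp [sgn, h]
  have hinv : ∀ n, |r n| ≤ M := by
    intro n
    induction n with
    | zero => exact hx
    | succ n ih =>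
      rw [hrs, abs_mul, abs_of_pos hβ0]
      have h1 : |r n - sgn (r n)| ≤ M - 1 := by
        rcases abs_le.mp ih with ⟨hl, hr⟩
        by_cases h : 0 ≤ r n
        · rw [hsgn_pos _ h, abs_le]; constructor <;> nlinarith
        · rw [hsgn_neg _ h, abs_le]; constructor <;> nlinarith
      have h2 : β * (M - 1) = M := by nlinarith
      nlinarith [mul_le_mul_of_nonneg_left h1 hβ0.le]
  set b : ℕ → ℝ := fun n => sgn (r n) with hb
  have hbpm : ∀ j, b j = 1 ∨ b j = -1 := fun j => hsgn (r j)
  have hbabs : ∀ j, |b j| = 1 := by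
    intro j; rcases hbpm j with h | h <;> simp [h]
  have hkey : ∀ n, x - ∑ j ∈ Finset.range n, b j * (β⁻¹) ^ j = (β⁻¹) ^ n * r n := by
    intro n
    induction n with
    | zero => simp [hr0]
    | succ n ih =>
      have hβne : β ≠ 0 := hβ0.ne'
      rw [Finset.sum_range_succ, hrs,
        show x - (∑ j ∈ Finset.range n, b j * β⁻¹ ^ j + b n * β⁻¹ ^ n)
          = (x - ∑ j ∈ Finset.range n, b j * β⁻¹ ^ j) - b n * β⁻¹ ^ n by ring, ih]
      have hbn : b n = sgn (r n) := rfl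
      rw [← hbn]
      field_simp
      ring_nf; rw [mul_inv_cancel₀ hβne]; ring
  have hinv0 : (0:ℝ) ≤ β⁻¹ := inv_nonneg.mpr hβ0.le
  have hinv1 : β⁻¹ < 1 := inv_lt_one_of_one_lt₀ hβ1
  have hsum : Summable (fun j => b j * (β⁻¹) ^ j) := by
    apply Summable.of_norm_bounded (summable_geometric_of_lt_one hinv0 hinv1)
    intro j
    rw [norm_mul, Real.norm_eq_abs, Real.norm_eq_abs, hbabs, one_mul,
      _root_.abs_of_nonneg (pow_nonneg hinv0 j)]
  have ht1 : Filter.Tendsto (fun n => ∑ j ∈ Finset.range n, b j * (β⁻¹) ^ j)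
      Filter.atTop (nhds (∑' j, b j * (β⁻¹) ^ j)) := hsum.hasSum.tendsto_sum_nat
  have ht2 : Filter.Tendsto (fun n => ∑ j ∈ Finset.range n, b j * (β⁻¹) ^ j)
      Filter.atTop (nhds x) := by
    have h0 : Filter.Tendsto (fun n : ℕ => M * (β⁻¹) ^ n) Filter.atTop (nhds 0) := by
      simpa using (tendsto_pow_atTop_nhds_zero_of_lt_one hinv0 hinv1).const_mul M
    have heq : (fun n => ∑ j ∈ Finset.range n, b j * (β⁻¹) ^ j)
        = fun n => x - (β⁻¹) ^ n * r n := by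
      funext n; linarith [hkey n]
    rw [heq, show nhds x = nhds (x - 0) by simp]
    apply Filter.Tendsto.const_sub
    apply squeeze_zero_norm _ h0
    intro n
    rw [norm_mul, Real.norm_eq_abs, Real.norm_eq_abs,
      _root_.abs_of_nonneg (pow_nonneg hinv0 n), mul_comm]
    exact mul_le_mul_of_nonneg_right (hinv n) (pow_nonneg hinv0 n)
  have : (∑' j, b j * (β⁻¹) ^ j) = x := tendsto_nhds_unique ht1 ht2
  exact ⟨b, hbpm, this ▸ hsum.hasSum⟩

/-- Bound on a ±1 geometric-type series. -/
lemma abs_tsum_pm_le (c : ℝ) (hc0 : 0 ≤ c) (hc1 : c < 1) (a : ℕ → ℝ)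
    (ha : ∀ k, |a k| = 1) : |∑' j : ℕ, a j * c ^ j| ≤ (1 - c)⁻¹ := by
  have hfn : (fun j : ℕ => ‖a j * c ^ j‖) = fun j => c ^ j := by
    funext j
    rw [norm_mul, Real.norm_eq_abs, Real.norm_eq_abs, ha, one_mul,
      _root_.abs_of_nonneg (pow_nonneg hc0 j)]
  have hs : Summable fun j : ℕ => ‖a j * c ^ j‖ := by
    rw [hfn]; exact summable_geometric_of_lt_one hc0 hc1
  calc |∑' j : ℕ, a j * c ^ j| = ‖∑' j : ℕ, a j * c ^ j‖ := (Real.norm_eq_abs _).symm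
    _ ≤ ∑' j : ℕ, ‖a j * c ^ j‖ := norm_tsum_le_tsum_norm hs
    _ = ∑' j : ℕ, c ^ j := by rw [hfn]
    _ = (1 - c)⁻¹ := tsum_geometric_of_lt_one hc0 hc1

/-- Regrouping a power series along residues mod `q`, when `κ ^ q` is real. -/
lemma regroup (q : ℕ) (hq : 0 < q) (κ : ℂ) (hκ1 : ‖κ‖ < 1)
    (c : ℝ) (hc : κ ^ q = (c : ℂ)) (a : ℕ → ℝ) (ha : ∀ k, |a k| = 1) :
    ∑' k : ℕ, (a k : ℂ) * κ ^ k
      = ∑ i ∈ Finset.range q,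
          ((∑' j : ℕ, a (j * q + i) * c ^ j : ℝ) : ℂ) * κ ^ i := by
  haveI : NeZero q := ⟨hq.ne'⟩
  set F : ℕ → ℂ := fun k => (a k : ℂ) * κ ^ k with hFdef
  have hnormF : ∀ k, ‖F k‖ = ‖κ‖ ^ k := by
    intro k
    rw [hFdef]
    simp only [norm_mul, norm_pow, Complex.norm_real, Real.norm_eq_abs, ha, one_mul]
  have hF : Summable F := by
    apply Summable.of_norm_bounded
      (summable_geometric_of_lt_one (norm_nonneg κ) hκ1)
    intro k; rw [hnormF]
  let e : Fin q × ℕ ≃ ℕ :=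
    (Equiv.prodComm (Fin q) ℕ).trans (Nat.divModEquiv q).symm
  have he : ∀ (i : Fin q) (j : ℕ), e (i, j) = j * q + (i : ℕ) := by
    intro i j; rfl
  have h1 : ∑' k : ℕ, F k = ∑' p : Fin q × ℕ, F (e p) := (e.tsum_eq F).symm
  have hFe : Summable fun p : Fin q × ℕ => F (e p) := hF.comp_injective e.injective
  have hfib : ∀ i : Fin q, Summable fun j : ℕ => F (e (i, j)) := by
    intro i
    apply hF.comp_injective
    intro j1 j2 h
    have := e.injective h
    simpa using this
  have h2 : ∑' p : Fin q × ℕ, F (e p) = ∑' (i : Fin q), ∑' (j : ℕ), F (e (i, j)) :=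
    Summable.tsum_prod' hFe hfib
  have hterm : ∀ i : Fin q,
      (∑' j : ℕ, F (e (i, j)))
        = ((∑' j : ℕ, a (j * q + (i : ℕ)) * c ^ j : ℝ) : ℂ) * κ ^ (i : ℕ) := by
    intro i
    have h5 : ∀ j : ℕ, F (e (i, j))
        = ((a (j * q + (i : ℕ)) * c ^ j : ℝ) : ℂ) * κ ^ (i : ℕ) := by
      intro j
      rw [he, hFdef]
      simp only
      rw [pow_add, show κ ^ (j * q) = (κ ^ q) ^ j by rw [← pow_mul, mul_comm], hc]
      push_cast
      ring
    rw [tsum_congr h5, tsum_mul_right, Complex.ofReal_tsum]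
  rw [h1, h2, tsum_fintype]
  rw [show (∑ i : Fin q, ∑' j : ℕ, F (e (i, j)))
      = ∑ i : Fin q, ((∑' j : ℕ, a (j * q + (i : ℕ)) * c ^ j : ℝ) : ℂ) * κ ^ (i : ℕ)
    from Finset.sum_congr rfl fun i _ => hterm i]
  exact Fin.sum_univ_eq_sum_range
    (fun i => ((∑' j : ℕ, a (j * q + i) * c ^ j : ℝ) : ℂ) * κ ^ i) q

theorem attractor_is_convex_polygon
    (ρ : ℝ) (hρ0 : 0 < ρ) (hρ1 : ρ < 1)
    (p q : ℕ) (hpq : Nat.Coprime p q) (hq_odd : Odd q)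
    (κ : ℂ) (hκ : κ = (ρ : ℂ) * Complex.exp (2 * Real.pi * Complex.I * p / q))
    (hnr : κ.im ≠ 0)
    (β : ℝ) (hβ : β = (ρ ^ q)⁻¹) (hβ2 : β ≤ 2) :
    Convex ℝ {z : ℂ | ∃ a : ℕ → ℝ, (∀ k, a k = 1 ∨ a k = -1) ∧
        z = ∑' k : ℕ, (a k : ℂ) * κ ^ k} ∧
    {z : ℂ | ∃ a : ℕ → ℝ, (∀ k, a k = 1 ∨ a k = -1) ∧
        z = ∑' k : ℕ, (a k : ℂ) * κ ^ k} =
      {z : ℂ | ∃ x : ℕ → ℝ,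
        (∀ i < q, x i ∈ Set.Icc (-(β / (β - 1))) (β / (β - 1))) ∧
        z = ∑ i ∈ Finset.range q, (x i : ℂ) * κ ^ i} := by
  have hq0 : 0 < q := hq_odd.pos
  set c : ℝ := ρ ^ q with hcdef
  have hc0 : (0:ℝ) < c := pow_pos hρ0 q
  have hc1 : c < 1 := pow_lt_one₀ hρ0.le hρ1 hq0.ne'
  have hβ1 : 1 < β := by rw [hβ]; exact (one_lt_inv₀ hc0).mpr hc1
  have hβinv : β⁻¹ = c := by rw [hβ, inv_inv]
  have hβ0 : (0:ℝ) < β := lt_trans one_pos hβ1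
  have hβm1 : (0:ℝ) < β - 1 := by linarith
  set M : ℝ := β / (β - 1) with hMdef
  have hMeq : (1 - c)⁻¹ = M := by
    rw [← hβinv, show (1:ℝ) - β⁻¹ = (β - 1) / β by field_simp, inv_div]
  have habsκ : ‖κ‖ = ρ := by
    rw [hκ, norm_mul,
      show (2 * (Real.pi:ℂ) * Complex.I * p / q : ℂ)
        = ((2 * Real.pi * p / q : ℝ) : ℂ) * Complex.I by push_cast; ring,
      Complex.norm_exp_ofReal_mul_I, Complex.norm_real, Real.norm_eq_abs, abs_of_pos hρ0, mul_one]
  have hκ1 : ‖κ‖ < 1 := by rw [habsκ]; exact hρ1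
  have hκq : κ ^ q = ((c : ℝ) : ℂ) := by
    have hqne : (q:ℂ) ≠ 0 := Nat.cast_ne_zero.mpr hq0.ne'
    rw [hκ, mul_pow, ← Complex.exp_nat_mul,
      show (q : ℂ) * (2 * (Real.pi:ℂ) * Complex.I * p / q)
        = ((p:ℤ) : ℂ) * (2 * (Real.pi:ℂ) * Complex.I) by push_cast; field_simp,
      Complex.exp_int_mul_two_pi_mul_I, mul_one, hcdef]
    push_cast
    ring
  have heq : {z : ℂ | ∃ a : ℕ → ℝ, (∀ k, a k = 1 ∨ a k = -1) ∧
        z = ∑' k : ℕ, (a k : ℂ) * κ ^ k} =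
      {z : ℂ | ∃ x : ℕ → ℝ,
        (∀ i < q, x i ∈ Set.Icc (-(β / (β - 1))) (β / (β - 1))) ∧
        z = ∑ i ∈ Finset.range q, (x i : ℂ) * κ ^ i} := by
    ext z
    constructor
    · rintro ⟨a, ha, rfl⟩
      have ha' : ∀ k, |a k| = 1 := by
        intro k; rcases ha k with h | h <;> simp [h]
      refine ⟨fun i => ∑' j : ℕ, a (j * q + i) * c ^ j, ?_, ?_⟩
      · intro i _
        have hb := abs_tsum_pm_le c hc0.le hc1 (fun j => a (j * q + i))
          (fun j => ha' _)
        rw [hMeq] at hb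
        rcases abs_le.mp hb with ⟨h1, h2⟩
        exact ⟨h1, h2⟩
      · exact regroup q hq0 κ hκ1 c hκq a ha'
    · rintro ⟨x, hx, rfl⟩
      have hgre : ∀ i : ℕ, ∃ b : ℕ → ℝ, (∀ j, b j = 1 ∨ b j = -1) ∧
          (i < q → HasSum (fun j => b j * (β⁻¹) ^ j) (x i)) := by
        intro i
        by_cases h : i < q
        · have hxi : |x i| ≤ β / (β - 1) := by
            rcases hx i h with ⟨h1, h2⟩
            exact abs_le.mpr ⟨h1, h2⟩
          obtain ⟨b, h1, h2⟩ := greedy_expansion β hβ1 hβ2 (x i) hxi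
          exact ⟨b, h1, fun _ => h2⟩
        · exact ⟨fun _ => 1, fun _ => Or.inl rfl, fun h' => absurd h' h⟩
      choose B hB1 hB2 using hgre
      refine ⟨fun k => B (k % q) (k / q), fun k => hB1 _ _, ?_⟩
      have ha' : ∀ k, |B (k % q) (k / q)| = 1 := by
        intro k; rcases hB1 (k % q) (k / q) with h | h <;> simp [h]
      rw [regroup q hq0 κ hκ1 c hκq _ ha']
      apply Finset.sum_congr rfl
      intro i hi
      have hiq : i < q := Finset.mem_range.mp hi
      congr 1
      norm_cast
      have hix : ∀ j : ℕ, B ((j * q + i) % q) ((j * q + i) / q) = B i j := by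
        intro j
        have hm : (j * q + i) % q = i := Nat.mul_add_mod_of_lt hiq
        have hd : (j * q + i) / q = j := by
          rw [mul_comm, Nat.mul_add_div hq0, Nat.div_eq_of_lt hiq, Nat.add_zero]
        rw [hm, hd]
      rw [tsum_congr (fun j => by rw [hix j])]
      rw [← hβinv]
      exact (hB2 i hiq).tsum_eq.symm
  refine ⟨?_, heq⟩
  rw [heq]
  intro z1 hz1 z2 hz2 t s ht hs hts
  obtain ⟨x, hx, rfl⟩ := hz1
  obtain ⟨y, hy, rfl⟩ := hz2
  refine ⟨fun i => t * x i + s * y i, ?_, ?_⟩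
  · intro i hi
    have := convex_Icc (-(β / (β - 1))) (β / (β - 1)) (hx i hi) (hy i hi) ht hs hts
    simpa [smul_eq_mul] using this
  · rw [Finset.smul_sum, Finset.smul_sum, ← Finset.sum_add_distrib]
    apply Finset.sum_congr rfl
    intro i _
    rw [Complex.real_smul, Complex.real_smul]
    push_cast
    ring
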